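/- (Schwarzian-derivative limit for the energy-momentum tensor.) Let x be a real-valued function that is three times continuously differentiable on a neighborhood of y ∈ ℝ with x'(y) ≠ 0. Then the limit lim_{ε→0} [ x'(y+ε)·x'(y)/(x(y+ε)−x(y))² − 1/ε² ] exists and equals (1/6)·S{x}(y), where S{x}(y) = x'''(y)/x'(y) − (3/2)·(x''(y)/x'(y))² is the Schwarzian derivative of x at y. -/

import Mathlib

open Filter Asymptotics Topology

lemma contDiffAt_deriv' {f : ℝ → ℝ} {y : ℝ} {m n : ℕ∞} (hf : ContDiffAt ℝ n f y)
    (hmn : m + 1 ≤ n) : ContDiffAt ℝ m (deriv f) y := by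
  have h := hf.fderiv_right (m := m) (by exact_mod_cast hmn)
  have heq : deriv f = fun z => (ContinuousLinearMap.apply ℝ ℝ (1:ℝ)) (fderiv ℝ f z) := by
    funext z; simp [ContinuousLinearMap.apply_apply, fderiv_apply_one_eq_deriv]
  rw [heq]
  exact ((ContinuousLinearMap.apply ℝ ℝ (1:ℝ)).contDiff.contDiffAt).comp y h

lemma key_lemma {g h : ℝ → ℝ} {n : ℕ} (hg0 : g 0 = 0)
    (hd : ∀ᶠ t in 𝓝 (0:ℝ), HasDerivAt g (h t) t)
    (hh : h =o[𝓝 0] fun t => t ^ n) :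
    g =o[𝓝 0] fun t => t ^ (n + 1) := by
  rw [isLittleO_iff] at hh ⊢
  intro C hC
  have h1 := hd.and (hh hC)
  rcases Metric.eventually_nhds_iff.1 h1 with ⟨δ, hδ, H⟩
  rw [Metric.eventually_nhds_iff]
  refine ⟨δ, hδ, fun ε hε => ?_⟩
  have hεδ : |ε| < δ := by rw [Real.dist_eq, sub_zero] at hε; exact hε
  have hsub : ∀ t ∈ Metric.closedBall (0:ℝ) |ε|, dist t 0 < δ := by
    intro t ht
    have h3 : |t| ≤ |ε| := by
      rw [Metric.mem_closedBall, Real.dist_eq, sub_zero] at ht; exact ht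
    rw [Real.dist_eq, sub_zero]; linarith
  have habs : ∀ t, t ∈ Metric.closedBall (0:ℝ) |ε| → |t| ≤ |ε| := by
    intro t ht
    rw [Metric.mem_closedBall, Real.dist_eq, sub_zero] at ht; exact ht
  have hbd := (convex_closedBall (0:ℝ) |ε|).norm_image_sub_le_of_norm_hasDerivWithin_le
    (f := g) (f' := h) (C := C * |ε| ^ n)
    (fun t ht => ((H (hsub t ht)).1).hasDerivWithinAt)
    (fun t ht => by
      have h2 := (H (hsub t ht)).2
      calc ‖h t‖ ≤ C * ‖t ^ n‖ := h2
        _ = C * |t| ^ n := by simp [abs_pow]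
        _ ≤ C * |ε| ^ n := mul_le_mul_of_nonneg_left (pow_le_pow_left₀ (abs_nonneg t) (habs t ht) n) hC.le)
    (Metric.mem_closedBall_self (abs_nonneg ε))
    (by rw [Metric.mem_closedBall, Real.dist_eq, sub_zero])
  calc ‖g ε‖ = ‖g ε - g 0‖ := by rw [hg0, sub_zero]
    _ ≤ C * |ε| ^ n * ‖ε - 0‖ := hbd
    _ = C * ‖ε ^ (n + 1)‖ := by
        rw [Real.norm_eq_abs, Real.norm_eq_abs, sub_zero, abs_pow, pow_succ]; ring

lemma peano1 {f : ℝ → ℝ} {y : ℝ} (hf : DifferentiableAt ℝ f y) :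
    (fun ε => f (y + ε) - f y - deriv f y * ε) =o[𝓝 0] fun ε : ℝ => ε := by
  have h := hasDerivAt_iff_isLittleO.1 hf.hasDerivAt
  have ht : Tendsto (fun ε : ℝ => y + ε) (𝓝 0) (𝓝 y) := by
    simpa using (tendsto_const_nhds (x := y) (f := 𝓝 (0:ℝ))).add tendsto_id
  have h2 := h.comp_tendsto ht
  simp only [Function.comp_def, add_sub_cancel_left, smul_eq_mul] at h2
  simpa [mul_comm] using h2

lemma peano2 {f : ℝ → ℝ} {y : ℝ} (hf : ContDiffAt ℝ 2 f y) :
    (fun ε => f (y + ε) - f y - deriv f y * ε - deriv (deriv f) y * ε ^ 2 / 2)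
      =o[𝓝 0] fun ε : ℝ => ε ^ 2 := by
  have hev : ∀ᶠ z in 𝓝 y, ContDiffAt ℝ 2 f z := hf.eventually (by simp)
  have ht : Tendsto (fun ε : ℝ => y + ε) (𝓝 0) (𝓝 y) := by
    simpa using (tendsto_const_nhds (x := y) (f := 𝓝 (0:ℝ))).add tendsto_id
  have hd : ∀ᶠ ε in 𝓝 (0:ℝ), HasDerivAt
      (fun ε' => f (y + ε') - f y - deriv f y * ε' - deriv (deriv f) y * ε' ^ 2 / 2)
      (deriv f (y + ε) - deriv f y - deriv (deriv f) y * ε) ε := by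
    filter_upwards [ht.eventually hev] with ε hε
    have h1 : HasDerivAt (fun ε' => f (y + ε')) (deriv f (y + ε)) ε :=
      HasDerivAt.comp_const_add y ε (hε.differentiableAt (by norm_num)).hasDerivAt
    have h2 : HasDerivAt (fun ε' : ℝ => deriv f y * ε') (deriv f y) ε := by
      simpa using (hasDerivAt_id ε).const_mul (deriv f y)
    have h3 : HasDerivAt (fun ε' : ℝ => deriv (deriv f) y * ε' ^ 2 / 2)
        (deriv (deriv f) y * ε) ε := by
      have := ((hasDerivAt_pow 2 ε).const_mul (deriv (deriv f) y)).div_const 2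
      refine this.congr_deriv ?_
      push_cast; ring
    exact ((h1.sub_const (f y)).sub h2).sub h3
  have hh : (fun ε => deriv f (y + ε) - deriv f y - deriv (deriv f) y * ε)
      =o[𝓝 0] fun ε : ℝ => ε ^ 1 := by
    have hdf : DifferentiableAt ℝ (deriv f) y :=
      (contDiffAt_deriv' (m := 1) hf (by norm_num)).differentiableAt (by norm_num)
    simpa [pow_one] using peano1 hdf
  have := key_lemma (by simp) hd hh
  simpa using this

lemma peano3 {f : ℝ → ℝ} {y : ℝ} (hf : ContDiffAt ℝ 3 f y) :
    (fun ε => f (y + ε) - f y - deriv f y * ε - deriv (deriv f) y * ε ^ 2 / 2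
      - deriv (deriv (deriv f)) y * ε ^ 3 / 6) =o[𝓝 0] fun ε : ℝ => ε ^ 3 := by
  have hev : ∀ᶠ z in 𝓝 y, ContDiffAt ℝ 3 f z := hf.eventually (by simp)
  have ht : Tendsto (fun ε : ℝ => y + ε) (𝓝 0) (𝓝 y) := by
    simpa using (tendsto_const_nhds (x := y) (f := 𝓝 (0:ℝ))).add tendsto_id
  have hd : ∀ᶠ ε in 𝓝 (0:ℝ), HasDerivAt
      (fun ε' => f (y + ε') - f y - deriv f y * ε' - deriv (deriv f) y * ε' ^ 2 / 2
        - deriv (deriv (deriv f)) y * ε' ^ 3 / 6)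
      (deriv f (y + ε) - deriv f y - deriv (deriv f) y * ε
        - deriv (deriv (deriv f)) y * ε ^ 2 / 2) ε := by
    filter_upwards [ht.eventually hev] with ε hε
    have h1 : HasDerivAt (fun ε' => f (y + ε')) (deriv f (y + ε)) ε :=
      HasDerivAt.comp_const_add y ε (hε.differentiableAt (by norm_num)).hasDerivAt
    have h2 : HasDerivAt (fun ε' : ℝ => deriv f y * ε') (deriv f y) ε := by
      simpa using (hasDerivAt_id ε).const_mul (deriv f y)
    have h3 : HasDerivAt (fun ε' : ℝ => deriv (deriv f) y * ε' ^ 2 / 2)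
        (deriv (deriv f) y * ε) ε := by
      have := ((hasDerivAt_pow 2 ε).const_mul (deriv (deriv f) y)).div_const 2
      refine this.congr_deriv ?_
      push_cast; ring
    have h4 : HasDerivAt (fun ε' : ℝ => deriv (deriv (deriv f)) y * ε' ^ 3 / 6)
        (deriv (deriv (deriv f)) y * ε ^ 2 / 2) ε := by
      have := ((hasDerivAt_pow 3 ε).const_mul (deriv (deriv (deriv f)) y)).div_const 6
      refine this.congr_deriv ?_
      push_cast; ring
    exact (((h1.sub_const (f y)).sub h2).sub h3).sub h4
  have hh : (fun ε => deriv f (y + ε) - deriv f y - deriv (deriv f) y * ε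
      - deriv (deriv (deriv f)) y * ε ^ 2 / 2) =o[𝓝 0] fun ε : ℝ => ε ^ 2 :=
    peano2 (contDiffAt_deriv' (m := 2) hf (by norm_num))
  have := key_lemma (by simp) hd hh
  simpa using this

set_option maxHeartbeats 1000000 in
theorem stmt7 (x : ℝ → ℝ) (y : ℝ)
    (hx : ContDiffAt ℝ 3 x y) (hx' : deriv x y ≠ 0) :
    Filter.Tendsto
      (fun ε : ℝ =>
        deriv x (y + ε) * deriv x y / (x (y + ε) - x y) ^ 2 - 1 / ε ^ 2)
      (nhdsWithin 0 {(0:ℝ)}ᶜ)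
      (nhds ((1 / 6) *
        (deriv (deriv (deriv x)) y / deriv x y
          - (3 / 2) * (deriv (deriv x) y / deriv x y) ^ 2))) := by
  set a := deriv x y with ha
  set b := deriv (deriv x) y with hb
  set c := deriv (deriv (deriv x)) y with hc
  set l := nhdsWithin (0:ℝ) {(0:ℝ)}ᶜ with hl
  set R : ℝ → ℝ := fun ε => (x (y + ε) - x y - a * ε - b * ε ^ 2 / 2 - c * ε ^ 3 / 6) / ε ^ 3
    with hR
  set S : ℝ → ℝ := fun ε => (deriv x (y + ε) - a - b * ε - c * ε ^ 2 / 2) / ε ^ 2 with hS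
  have hRt : Tendsto R l (𝓝 0) :=
    ((peano3 hx).tendsto_div_nhds_zero).mono_left nhdsWithin_le_nhds
  have hSt : Tendsto S l (𝓝 0) := by
    have h2 : ContDiffAt ℝ 2 (deriv x) y := contDiffAt_deriv' (m := 2) hx (by norm_num)
    exact ((peano2 h2).tendsto_div_nhds_zero).mono_left nhdsWithin_le_nhds
  have hid : Tendsto (fun ε : ℝ => ε) l (𝓝 0) := tendsto_id.mono_left nhdsWithin_le_nhds
  -- the continuous model function
  have htriple : Tendsto (fun ε : ℝ => ((ε, R ε, S ε) : ℝ × ℝ × ℝ)) l (𝓝 (0, 0, 0)) :=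
    hid.prodMk_nhds (hRt.prodMk_nhds hSt)
  set num : ℝ × ℝ × ℝ → ℝ := fun p =>
    a * c / 6 - b ^ 2 / 4 + a * p.2.2 - b * c / 6 * p.1 - c ^ 2 / 36 * p.1 ^ 2
      - 2 * p.2.1 * (a + b / 2 * p.1 + c / 6 * p.1 ^ 2) - p.2.1 ^ 2 * p.1 ^ 2 with hnum
  set den : ℝ × ℝ × ℝ → ℝ := fun p => a + b / 2 * p.1 + c / 6 * p.1 ^ 2 + p.2.1 * p.1 ^ 2
    with hden
  have hdenc : Continuous den := by fun_prop
  have hnumc : Continuous num := by fun_prop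
  have hden0 : den (0, 0, 0) = a := by simp [hden]
  have hF : ContinuousAt (fun p => num p / (den p) ^ 2) ((0, 0, 0) : ℝ × ℝ × ℝ) := by
    apply ContinuousAt.div (hnumc.continuousAt) ((hdenc.pow 2).continuousAt)
    rw [Pi.pow_apply, hden0]
    exact pow_ne_zero 2 hx'
  have hlim : Tendsto (fun ε : ℝ => num (ε, R ε, S ε) / (den (ε, R ε, S ε)) ^ 2) l
      (𝓝 (num (0, 0, 0) / (den (0, 0, 0)) ^ 2)) := hF.tendsto.comp htriple
  have hdne : ∀ᶠ ε in l, den (ε, R ε, S ε) ≠ 0 := by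
    have : Tendsto (fun ε => den (ε, R ε, S ε)) l (𝓝 a) := by
      have := (hdenc.continuousAt (x := ((0,0,0) : ℝ × ℝ × ℝ))).tendsto.comp htriple
      rwa [hden0] at this
    exact this.eventually_ne hx'
  have hεne : ∀ᶠ ε in l, ε ≠ 0 := by
    filter_upwards [self_mem_nhdsWithin] with ε hε
    simpa using hε
  clear_value num den R S a b c l
  have heq : ∀ᶠ ε in l,
      deriv x (y + ε) * a / (x (y + ε) - x y) ^ 2 - 1 / ε ^ 2
        = num (ε, R ε, S ε) / (den (ε, R ε, S ε)) ^ 2 := by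
    filter_upwards [hdne, hεne] with ε hd0 hε0
    have hΔ : x (y + ε) - x y = ε * den (ε, R ε, S ε) := by
      simp only [hden, hR]
      field_simp
      ring
    have hD : deriv x (y + ε) = a + b * ε + c / 2 * ε ^ 2 + S ε * ε ^ 2 := by
      simp only [hS]
      field_simp
      ring
    rw [hΔ, hD]
    simp only [hnum, hden] at hd0 ⊢
    generalize R ε = u at hd0 ⊢
    generalize S ε = v at hd0 ⊢
    have h1 : ε ^ 2 ≠ 0 := pow_ne_zero 2 hε0
    have h2 : (a + b / 2 * ε + c / 6 * ε ^ 2 + u * ε ^ 2) ^ 2 ≠ 0 := pow_ne_zero 2 hd0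
    rw [mul_pow, div_sub_div _ _ (mul_ne_zero h1 h2) h1,
      div_eq_div_iff (mul_ne_zero (mul_ne_zero h1 h2) h1) h2]
    ring
  have hval : num (0, 0, 0) / (den (0, 0, 0)) ^ 2
      = (1 / 6) * (c / a - (3 / 2) * (b / a) ^ 2) := by
    rw [hden0]
    simp only [hnum]
    field_simp
    ring
  rw [← hval]
  exact hlim.congr' (heq.mono fun ε h => h.symm)
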